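/- Let Λ be a finite set with N := |Λ|, and let m and m' both lie in the range of m_N. Viewing μ_MC^{m;N} and μ_MC^{m';N} as probability measures on ℝ^Λ ≅ ℝ^N supported on {−1,1}^Λ, the specific 1-norm fluctuation distance satisfies exactly w₁(μ_MC^{m;N}, μ_MC^{m';N}; N) = |m' − m|. -/

import Mathlib

open MeasureTheory

/-- The specific `p`-norm fluctuation distance `w_p(μ₁, μ₂; N)` for probability measures on
`ℝ^Λ` with `N = |Λ|`. -/
noncomputable def fluctDist (p : ℝ) {ι : Type} [Fintype ι] (μ₁ μ₂ : Measure (ι → ℝ)) : ℝ :=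
  sInf {c : ℝ | ∃ γ : Measure ((ι → ℝ) × (ι → ℝ)), IsProbabilityMeasure γ ∧
      γ.map Prod.fst = μ₁ ∧ γ.map Prod.snd = μ₂ ∧
      c = ∫ xy, (Fintype.card ι : ℝ)⁻¹ * ∑ i, |xy.1 i - xy.2 i| ^ p ∂γ} ^ (1 / p)

/-- The magnetization `M[φ] = ∑_{x ∈ Λ} φ(x)` of a spin configuration `φ ∈ {−1,1}^Λ`,
encoded as `φ : Λ → Bool` with `true ↦ 1`, `false ↦ −1`. -/
noncomputable def mag {Λ : Type} [Fintype Λ] (φ : Λ → Bool) : ℝ :=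
  ∑ x, if φ x then (1 : ℝ) else -1

-- The set `S_m` of configurations with magnetization density `m`.
open Classical in
noncomputable def magSet (Λ : Type) [Fintype Λ] (m : ℝ) : Finset (Λ → Bool) :=
  Finset.univ.filter fun φ => mag φ / (Fintype.card Λ) = m

/-- The auxiliary microcanonical ensemble `μ_MC^{m;N}`, the uniform probability measure on
`S_m`, viewed as a measure on `ℝ^Λ` supported on `{−1,1}^Λ`. -/
noncomputable def mcMeasure (Λ : Type) [Fintype Λ] [DecidableEq Λ] (m : ℝ) :
    Measure (Λ → ℝ) :=
  (((magSet Λ m).card : ENNReal))⁻¹ •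
    ∑ φ ∈ magSet Λ m, Measure.dirac fun x => if φ x then (1 : ℝ) else -1

section aux
set_option linter.unusedSectionVars false
variable {Λ : Type} [Fintype Λ] [DecidableEq Λ]

def spinEmb (φ : Λ → Bool) : Λ → ℝ := fun x => if φ x then 1 else -1

def trueSet (φ : Λ → Bool) : Finset Λ := Finset.univ.filter (φ · = true)

lemma sum_spinEmb (φ : Λ → Bool) : ∑ x, spinEmb φ x = mag φ := rfl

lemma mag_eq (φ : Λ → Bool) :
    mag φ = 2 * (trueSet φ).card - Fintype.card Λ := by
  classical
  have h := Finset.sum_filter_add_sum_filter_not Finset.univ (fun x => φ x = true)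
    (fun x => if φ x then (1:ℝ) else -1)
  rw [mag, ← h]
  rw [Finset.sum_congr rfl (fun x hx => by
    simp only [Finset.mem_filter] at hx; simp [hx.2] : ∀ x ∈ Finset.univ.filter (fun x => φ x = true), (if φ x then (1:ℝ) else -1) = 1)]
  rw [Finset.sum_congr rfl (fun x hx => by
    simp only [Finset.mem_filter, Bool.not_eq_true] at hx; simp [hx.2] : ∀ x ∈ Finset.univ.filter (fun x => ¬ φ x = true), (if φ x then (1:ℝ) else -1) = -1)]
  simp only [Finset.sum_const, nsmul_eq_mul, mul_one, mul_neg_one, trueSet]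
  have : (Finset.univ.filter fun x => ¬ φ x = true).card
      = Fintype.card Λ - (Finset.univ.filter fun x => φ x = true).card := by
    rw [← Finset.card_univ]
    rw [Finset.filter_not, Finset.card_sdiff_of_subset (Finset.filter_subset _ _)]
  rw [this]
  have hle : (Finset.univ.filter fun x => φ x = true).card ≤ Fintype.card Λ := by
    rw [← Finset.card_univ]; exact Finset.card_filter_le _ _
  push_cast [hle]
  ring

lemma mem_magSet {m : ℝ} {φ : Λ → Bool} :
    φ ∈ magSet Λ m ↔ mag φ / (Fintype.card Λ) = m := by
  simp [magSet]

lemma trueSet_card_le (φ : Λ → Bool) : (trueSet φ).card ≤ Fintype.card Λ := by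
  rw [← Finset.card_univ]; exact Finset.card_le_card (Finset.filter_subset _ _)

lemma card_eq_of_mag_eq {φ ψ : Λ → Bool} (h : mag φ = mag ψ) :
    (trueSet φ).card = (trueSet ψ).card := by
  rw [mag_eq, mag_eq] at h
  have : ((trueSet φ).card : ℝ) = (trueSet ψ).card := by linarith
  exact_mod_cast this

lemma card_eq_of_mem {m : ℝ} {φ ψ : Λ → Bool} (hφ : φ ∈ magSet Λ m) (hψ : ψ ∈ magSet Λ m) :
    (trueSet φ).card = (trueSet ψ).card := by
  rw [mem_magSet] at hφ hψ
  rcases eq_or_ne (Fintype.card Λ) 0 with h0 | h0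
  · have h1 : (trueSet φ).card = 0 := Nat.le_zero.mp (h0 ▸ trueSet_card_le φ)
    have h2 : (trueSet ψ).card = 0 := Nat.le_zero.mp (h0 ▸ trueSet_card_le ψ)
    rw [h1, h2]
  · apply card_eq_of_mag_eq
    have hc : ((Fintype.card Λ : ℝ)) ≠ 0 := Nat.cast_ne_zero.mpr h0
    field_simp at hφ hψ
    rw [hφ, hψ]

end aux

section coupling
set_option linter.unusedSectionVars false
variable {Λ : Type} [Fintype Λ] [DecidableEq Λ]

def boolOf (A : Finset Λ) : Λ → Bool := fun x => decide (x ∈ A)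

@[simp] lemma trueSet_boolOf (A : Finset Λ) : trueSet (boolOf A) = A := by
  ext x; simp [trueSet, boolOf]

@[simp] lemma boolOf_trueSet (φ : Λ → Bool) : boolOf (trueSet φ) = φ := by
  funext x; simp [trueSet, boolOf]

open Classical in
noncomputable def cpl (Λ : Type) [Fintype Λ] [DecidableEq Λ] (m m' : ℝ) :
    Finset ((Λ → Bool) × (Λ → Bool)) :=
  Finset.univ.filter fun p => p.1 ∈ magSet Λ m ∧ p.2 ∈ magSet Λ m' ∧ trueSet p.1 ⊆ trueSet p.2

lemma mem_cpl {m m' : ℝ} {p : (Λ → Bool) × (Λ → Bool)} :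
    p ∈ cpl Λ m m' ↔ p.1 ∈ magSet Λ m ∧ p.2 ∈ magSet Λ m' ∧ trueSet p.1 ⊆ trueSet p.2 := by
  simp [cpl]

lemma fiber_fst_card {m m' : ℝ} {ψ₀ : Λ → Bool} (hψ₀ : ψ₀ ∈ magSet Λ m')
    {φ : Λ → Bool} (hφ : φ ∈ magSet Λ m) (hk : (trueSet φ).card ≤ (trueSet ψ₀).card) :
    ((cpl Λ m m').filter (·.1 = φ)).card
      = (Fintype.card Λ - (trueSet φ).card).choose ((trueSet ψ₀).card - (trueSet φ).card) := by
  classical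
  set k := (trueSet φ).card
  set k' := (trueSet ψ₀).card
  have key : ((cpl Λ m m').filter (·.1 = φ)).card
      = (((trueSet φ)ᶜ).powersetCard (k' - k)).card := by
    refine Finset.card_bij' (fun p _ => trueSet p.2 \ trueSet φ)
      (fun D _ => (φ, boolOf (trueSet φ ∪ D))) ?_ ?_ ?_ ?_
    · intro p hp
      simp only [Finset.mem_filter] at hp
      obtain ⟨hpc, hp1⟩ := hp
      rw [mem_cpl] at hpc
      obtain ⟨h1, h2, h3⟩ := hpc
      rw [hp1] at h3
      rw [Finset.mem_powersetCard]
      constructor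
      · intro x hx
        rw [Finset.mem_sdiff] at hx
        simp [Finset.mem_compl, hx.2]
      · rw [Finset.card_sdiff_of_subset h3]
        rw [card_eq_of_mem h2 hψ₀]
    · intro D hD
      rw [Finset.mem_powersetCard] at hD
      obtain ⟨hD1, hD2⟩ := hD
      have hdisj : Disjoint (trueSet φ) D := by
        rw [Finset.disjoint_right]
        intro x hx
        have := hD1 hx
        simp only [Finset.mem_compl] at this
        exact this
      have hcard : (trueSet φ ∪ D).card = k' := by
        rw [Finset.card_union_of_disjoint hdisj, hD2, Nat.add_sub_cancel' hk]
      rw [Finset.mem_filter]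
      refine ⟨mem_cpl.mpr ⟨hφ, ?_, ?_⟩, rfl⟩
      · rw [mem_magSet] at hψ₀ ⊢
        rw [mag_eq, trueSet_boolOf, hcard, ← mag_eq ψ₀, hψ₀]
      · rw [trueSet_boolOf]; exact Finset.subset_union_left
    · intro p hp
      simp only [Finset.mem_filter] at hp
      obtain ⟨hpc, hp1⟩ := hp
      rw [mem_cpl] at hpc
      have h3 := hpc.2.2
      rw [hp1] at h3
      have heq : trueSet φ ∪ trueSet p.2 \ trueSet φ = trueSet p.2 :=
        Finset.union_sdiff_of_subset h3
      rw [heq, boolOf_trueSet]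
      exact Prod.ext hp1.symm rfl
    · intro D hD
      rw [Finset.mem_powersetCard] at hD
      have hdisj : Disjoint (trueSet φ) D := by
        rw [Finset.disjoint_right]
        intro x hx
        have := hD.1 hx
        simp only [Finset.mem_compl] at this
        exact this
      dsimp only
      rw [trueSet_boolOf, Finset.union_sdiff_cancel_left hdisj]
  rw [key, Finset.card_powersetCard, Finset.card_compl]

lemma fiber_snd_card {m m' : ℝ} {φ₀ : Λ → Bool} (hφ₀ : φ₀ ∈ magSet Λ m)
    {ψ : Λ → Bool} (hψ : ψ ∈ magSet Λ m') :
    ((cpl Λ m m').filter (·.2 = ψ)).card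
      = ((trueSet ψ).card).choose ((trueSet φ₀).card) := by
  classical
  have key : ((cpl Λ m m').filter (·.2 = ψ)).card
      = ((trueSet ψ).powersetCard ((trueSet φ₀).card)).card := by
    refine Finset.card_bij' (fun p _ => trueSet p.1) (fun A _ => (boolOf A, ψ)) ?_ ?_ ?_ ?_
    · intro p hp
      simp only [Finset.mem_filter] at hp
      obtain ⟨hpc, hp2⟩ := hp
      rw [mem_cpl] at hpc
      rw [Finset.mem_powersetCard]
      exact ⟨hp2 ▸ hpc.2.2, card_eq_of_mem hpc.1 hφ₀⟩
    · intro A hA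
      rw [Finset.mem_powersetCard] at hA
      rw [Finset.mem_filter]
      refine ⟨mem_cpl.mpr ⟨?_, hψ, by rw [trueSet_boolOf]; exact hA.1⟩, rfl⟩
      rw [mem_magSet] at hφ₀ ⊢
      rw [mag_eq, trueSet_boolOf, hA.2, ← mag_eq φ₀, hφ₀]
    · intro p hp
      simp only [Finset.mem_filter] at hp
      rw [boolOf_trueSet]
      exact Prod.ext rfl hp.2.symm
    · intro A hA
      dsimp only
      rw [trueSet_boolOf]
  rw [key, Finset.card_powersetCard]
end coupling

section measures
set_option linter.unusedSectionVars false
open Measure in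
lemma measure_map_finset_sum {α β ι : Type*} [MeasurableSpace α] [MeasurableSpace β]
    {f : α → β} (hf : Measurable f) (s : Finset ι) (μ : ι → Measure α) :
    (∑ i ∈ s, μ i).map f = ∑ i ∈ s, (μ i).map f := by
  classical
  induction s using Finset.induction_on with
  | empty => simp [Measure.map_zero]
  | insert _ _ h ih => rw [Finset.sum_insert h, Finset.sum_insert h, Measure.map_add _ _ hf, ih]

lemma isProb_unif {α ι : Type*} [MeasurableSpace α] (s : Finset ι) (hs : s.Nonempty)
    (f : ι → α) :
    IsProbabilityMeasure ((s.card : ENNReal)⁻¹ • ∑ i ∈ s, Measure.dirac (f i)) := by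
  constructor
  rw [Measure.smul_apply, Measure.finset_sum_apply]
  simp only [measure_univ, Finset.sum_const, nsmul_eq_mul, mul_one, smul_eq_mul]
  exact ENNReal.inv_mul_cancel (by exact_mod_cast Finset.card_ne_zero.mpr hs)
    (ENNReal.natCast_ne_top _)

lemma nat_inv_smul_helper {α : Type*} [MeasurableSpace α] (a b : ℕ) (hb : b ≠ 0)
    (X : Measure α) :
    (((a * b : ℕ)) : ENNReal)⁻¹ • (b • X) = ((a : ENNReal))⁻¹ • X := by
  rw [← Nat.cast_smul_eq_nsmul ENNReal b X, smul_smul]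
  congr 1
  push_cast
  rw [ENNReal.mul_inv (Or.inr (ENNReal.natCast_ne_top b)) (Or.inl (ENNReal.natCast_ne_top a)),
    mul_assoc, ENNReal.inv_mul_cancel (by exact_mod_cast hb) (ENNReal.natCast_ne_top b), mul_one]

variable {Λ : Type} [Fintype Λ] [DecidableEq Λ]

lemma mcMeasure_eq (m : ℝ) :
    mcMeasure Λ m = ((magSet Λ m).card : ENNReal)⁻¹ •
      ∑ φ ∈ magSet Λ m, Measure.dirac (spinEmb φ) := rfl

lemma isProb_mcMeasure {m : ℝ} (hm : (magSet Λ m).Nonempty) :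
    IsProbabilityMeasure (mcMeasure Λ m) := by
  rw [mcMeasure_eq]; exact isProb_unif _ hm _

noncomputable def cplMeasure (Λ : Type) [Fintype Λ] [DecidableEq Λ] (m m' : ℝ) :
    Measure ((Λ → ℝ) × (Λ → ℝ)) :=
  (((cpl Λ m m').card : ENNReal))⁻¹ •
    ∑ p ∈ cpl Λ m m', Measure.dirac (spinEmb p.1, spinEmb p.2)

end measures

section main
set_option linter.unusedSectionVars false
variable {Λ : Type} [Fintype Λ] [DecidableEq Λ]

lemma trueSet_card_mono {m m' : ℝ} {φ₀ ψ₀ : Λ → Bool} (hφ₀ : φ₀ ∈ magSet Λ m)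
    (hψ₀ : ψ₀ ∈ magSet Λ m') (hmm : m ≤ m') :
    (trueSet φ₀).card ≤ (trueSet ψ₀).card := by
  rcases eq_or_ne (Fintype.card Λ) 0 with h0 | h0
  · have h := trueSet_card_le φ₀
    omega
  · rw [mem_magSet] at hφ₀ hψ₀
    have hN : (0:ℝ) < Fintype.card Λ := by
      exact_mod_cast Nat.pos_of_ne_zero h0
    rw [← hφ₀, ← hψ₀] at hmm
    have hmag : mag φ₀ ≤ mag ψ₀ := (div_le_div_iff_of_pos_right hN).mp hmm
    rw [mag_eq, mag_eq] at hmag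
    have : ((trueSet φ₀).card : ℝ) ≤ (trueSet ψ₀).card := by linarith
    exact_mod_cast this

lemma cpl_card_fst {m m' : ℝ} {φ₀ ψ₀ : Λ → Bool} (hφ₀ : φ₀ ∈ magSet Λ m)
    (hψ₀ : ψ₀ ∈ magSet Λ m') (hk : (trueSet φ₀).card ≤ (trueSet ψ₀).card) :
    (cpl Λ m m').card = (magSet Λ m).card *
      (Fintype.card Λ - (trueSet φ₀).card).choose ((trueSet ψ₀).card - (trueSet φ₀).card) := by
  classical
  rw [Finset.card_eq_sum_card_fiberwise (f := Prod.fst) (t := magSet Λ m)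
    (fun p hp => (mem_cpl.mp hp).1)]
  rw [Finset.sum_congr rfl (fun φ hφ => by
    rw [fiber_fst_card hψ₀ hφ (by rw [card_eq_of_mem hφ hφ₀]; exact hk),
      card_eq_of_mem hφ hφ₀])]
  rw [Finset.sum_const, smul_eq_mul]

lemma cpl_card_snd {m m' : ℝ} {φ₀ ψ₀ : Λ → Bool} (hφ₀ : φ₀ ∈ magSet Λ m)
    (hψ₀ : ψ₀ ∈ magSet Λ m') :
    (cpl Λ m m').card = (magSet Λ m').card *
      ((trueSet ψ₀).card).choose ((trueSet φ₀).card) := by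
  classical
  rw [Finset.card_eq_sum_card_fiberwise (f := Prod.snd) (t := magSet Λ m')
    (fun p hp => (mem_cpl.mp hp).2.1)]
  rw [Finset.sum_congr rfl (fun ψ hψ => by
    rw [fiber_snd_card hφ₀ hψ, card_eq_of_mem hψ hψ₀])]
  rw [Finset.sum_const, smul_eq_mul]

lemma cpl_card_ne_zero {m m' : ℝ} {φ₀ ψ₀ : Λ → Bool} (hφ₀ : φ₀ ∈ magSet Λ m)
    (hψ₀ : ψ₀ ∈ magSet Λ m') (hk : (trueSet φ₀).card ≤ (trueSet ψ₀).card) :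
    (cpl Λ m m').card ≠ 0 := by
  rw [cpl_card_fst hφ₀ hψ₀ hk]
  have h1 : 0 < (magSet Λ m).card := Finset.card_pos.mpr ⟨φ₀, hφ₀⟩
  have h2 : 0 < (Fintype.card Λ - (trueSet φ₀).card).choose
      ((trueSet ψ₀).card - (trueSet φ₀).card) :=
    Nat.choose_pos (Nat.sub_le_sub_right (trueSet_card_le ψ₀) _)
  positivity

lemma cplMeasure_map_fst {m m' : ℝ} {φ₀ ψ₀ : Λ → Bool} (hφ₀ : φ₀ ∈ magSet Λ m)
    (hψ₀ : ψ₀ ∈ magSet Λ m') (hk : (trueSet φ₀).card ≤ (trueSet ψ₀).card) :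
    (cplMeasure Λ m m').map Prod.fst = mcMeasure Λ m := by
  classical
  set c2 := (Fintype.card Λ - (trueSet φ₀).card).choose
      ((trueSet ψ₀).card - (trueSet φ₀).card) with hc2def
  have hc2 : c2 ≠ 0 :=
    (Nat.choose_pos (Nat.sub_le_sub_right (trueSet_card_le ψ₀) _)).ne'
  rw [cplMeasure, Measure.map_smul, measure_map_finset_sum measurable_fst]
  rw [Finset.sum_congr rfl (fun p _ => Measure.map_dirac' measurable_fst _)]
  have h2 : ∑ p ∈ cpl Λ m m', Measure.dirac (spinEmb p.1)
      = ∑ φ ∈ magSet Λ m, ∑ p ∈ (cpl Λ m m').filter (fun p => p.1 = φ),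
          Measure.dirac (spinEmb φ) :=
    (Finset.sum_fiberwise_of_maps_to' (g := Prod.fst)
      (f := fun φ => Measure.dirac (spinEmb φ)) (fun p hp => (mem_cpl.mp hp).1)).symm
  rw [h2]
  rw [Finset.sum_congr rfl (fun φ hφ => by
    rw [Finset.sum_const, fiber_fst_card hψ₀ hφ (by rw [card_eq_of_mem hφ hφ₀]; exact hk),
      card_eq_of_mem hφ hφ₀])]
  rw [← Finset.smul_sum, cpl_card_fst hφ₀ hψ₀ hk, ← hc2def,
    nat_inv_smul_helper _ _ hc2, mcMeasure_eq]

lemma cplMeasure_map_snd {m m' : ℝ} {φ₀ ψ₀ : Λ → Bool} (hφ₀ : φ₀ ∈ magSet Λ m)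
    (hψ₀ : ψ₀ ∈ magSet Λ m') (hk : (trueSet φ₀).card ≤ (trueSet ψ₀).card) :
    (cplMeasure Λ m m').map Prod.snd = mcMeasure Λ m' := by
  classical
  set c1 := ((trueSet ψ₀).card).choose ((trueSet φ₀).card) with hc1def
  have hc1 : c1 ≠ 0 := (Nat.choose_pos hk).ne'
  rw [cplMeasure, Measure.map_smul, measure_map_finset_sum measurable_snd]
  rw [Finset.sum_congr rfl (fun p _ => Measure.map_dirac' measurable_snd _)]
  have h2 : ∑ p ∈ cpl Λ m m', Measure.dirac (spinEmb p.2)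
      = ∑ ψ ∈ magSet Λ m', ∑ p ∈ (cpl Λ m m').filter (fun p => p.2 = ψ),
          Measure.dirac (spinEmb ψ) :=
    (Finset.sum_fiberwise_of_maps_to' (g := Prod.snd)
      (f := fun ψ => Measure.dirac (spinEmb ψ)) (fun p hp => (mem_cpl.mp hp).2.1)).symm
  rw [h2]
  rw [Finset.sum_congr rfl (fun ψ hψ => by
    rw [Finset.sum_const, fiber_snd_card hφ₀ hψ, card_eq_of_mem hψ hψ₀])]
  rw [← Finset.smul_sum, cpl_card_snd hφ₀ hψ₀, ← hc1def,
    nat_inv_smul_helper _ _ hc1, mcMeasure_eq]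

lemma isProb_cplMeasure {m m' : ℝ} {φ₀ ψ₀ : Λ → Bool} (hφ₀ : φ₀ ∈ magSet Λ m)
    (hψ₀ : ψ₀ ∈ magSet Λ m') (hk : (trueSet φ₀).card ≤ (trueSet ψ₀).card) :
    IsProbabilityMeasure (cplMeasure Λ m m') :=
  isProb_unif _ (Finset.card_pos.mp (Nat.pos_of_ne_zero (cpl_card_ne_zero hφ₀ hψ₀ hk))) _

end main

section integrals
set_option linter.unusedSectionVars false
variable {Λ : Type} [Fintype Λ] [DecidableEq Λ]

lemma gmeas : Measurable (fun xy : (Λ → ℝ) × (Λ → ℝ) =>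
    (Fintype.card Λ : ℝ)⁻¹ * ∑ i, |xy.1 i - xy.2 i|) := by
  apply Measurable.const_mul
  apply Finset.measurable_sum
  intro i _
  apply Measurable.abs
  exact ((measurable_pi_apply i).comp measurable_fst).sub
    ((measurable_pi_apply i).comp measurable_snd)

lemma integrable_dirac_of_measurable {α : Type*} [MeasurableSpace α]
    [MeasurableSingletonClass α] {f : α → ℝ} (hf : Measurable f) (a : α) :
    Integrable f (Measure.dirac a) := by
  refine ⟨hf.aestronglyMeasurable, ?_⟩
  rw [hasFiniteIntegral_iff_norm, lintegral_dirac]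
  exact ENNReal.ofReal_lt_top

lemma spin_term {φ ψ : Λ → Bool} (h : trueSet φ ⊆ trueSet ψ) (x : Λ) :
    |spinEmb φ x - spinEmb ψ x| = spinEmb ψ x - spinEmb φ x := by
  by_cases hx1 : φ x = true
  · have hx2 : ψ x = true := by
      have hmem : x ∈ trueSet φ := by simp [trueSet, hx1]
      have := h hmem
      simpa [trueSet] using this
    simp [spinEmb, hx1, hx2]
  · by_cases hx2 : ψ x = true <;> simp [spinEmb, hx1, hx2] <;> norm_num

lemma g_val {m m' : ℝ} {p : (Λ → Bool) × (Λ → Bool)} (hp : p ∈ cpl Λ m m') :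
    (Fintype.card Λ : ℝ)⁻¹ * ∑ i, |spinEmb p.1 i - spinEmb p.2 i| = m' - m := by
  obtain ⟨h1, h2, h3⟩ := mem_cpl.mp hp
  rw [Finset.sum_congr rfl (fun x _ => spin_term h3 x), Finset.sum_sub_distrib,
    sum_spinEmb, sum_spinEmb, mul_sub, inv_mul_eq_div, inv_mul_eq_div,
    mem_magSet.mp h2, mem_magSet.mp h1]

lemma integral_cplMeasure {m m' : ℝ} {φ₀ ψ₀ : Λ → Bool} (hφ₀ : φ₀ ∈ magSet Λ m)
    (hψ₀ : ψ₀ ∈ magSet Λ m') (hk : (trueSet φ₀).card ≤ (trueSet ψ₀).card) :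
    ∫ xy, (Fintype.card Λ : ℝ)⁻¹ * ∑ i, |xy.1 i - xy.2 i| ∂(cplMeasure Λ m m')
      = m' - m := by
  have hcard := cpl_card_ne_zero hφ₀ hψ₀ hk
  rw [cplMeasure, integral_smul_measure,
    integral_finset_sum_measure (fun p _ => integrable_dirac_of_measurable gmeas _)]
  have hsum : ∑ p ∈ cpl Λ m m', ∫ xy, (Fintype.card Λ : ℝ)⁻¹ * ∑ i, |xy.1 i - xy.2 i|
        ∂Measure.dirac (spinEmb p.1, spinEmb p.2)
      = ∑ _p ∈ cpl Λ m m', (m' - m) := by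
    refine Finset.sum_congr rfl (fun p hp => ?_)
    rw [integral_dirac (fun xy : (Λ → ℝ) × (Λ → ℝ) =>
      (Fintype.card Λ : ℝ)⁻¹ * ∑ i, |xy.1 i - xy.2 i|)]
    exact g_val hp
  rw [hsum, Finset.sum_const, smul_eq_mul, nsmul_eq_mul, ENNReal.toReal_inv, ENNReal.toReal_natCast]
  rw [← mul_assoc, inv_mul_cancel₀ (by exact_mod_cast hcard), one_mul]

lemma lower_bound {m m' : ℝ} (hmne : (magSet Λ m).Nonempty) (hm'ne : (magSet Λ m').Nonempty)
    (γ : Measure ((Λ → ℝ) × (Λ → ℝ))) (hγ : IsProbabilityMeasure γ)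
    (h1 : γ.map Prod.fst = mcMeasure Λ m) (h2 : γ.map Prod.snd = mcMeasure Λ m') :
    |m' - m| ≤ ∫ xy, (Fintype.card Λ : ℝ)⁻¹ * ∑ i, |xy.1 i - xy.2 i| ∂γ := by
  classical
  set A := (magSet Λ m).image spinEmb with hA
  set B := (magSet Λ m').image spinEmb with hB
  have hAm : MeasurableSet (↑A : Set (Λ → ℝ)) := A.finite_toSet.measurableSet
  have hBm : MeasurableSet (↑B : Set (Λ → ℝ)) := B.finite_toSet.measurableSet
  have hmc0 : ∀ (mm : ℝ), mcMeasure Λ mm ((↑((magSet Λ mm).image spinEmb) : Set (Λ → ℝ)))ᶜ = 0 := by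
    intro mm
    rw [mcMeasure_eq, Measure.smul_apply, Measure.finset_sum_apply]
    have : ∀ φ ∈ magSet Λ mm,
        Measure.dirac (spinEmb φ) ((↑((magSet Λ mm).image spinEmb) : Set (Λ → ℝ)))ᶜ = 0 := by
      intro φ hφ
      rw [Measure.dirac_apply' _ ((((magSet Λ mm).image spinEmb).finite_toSet.measurableSet).compl)]
      have hmem : spinEmb φ ∈ (↑((magSet Λ mm).image spinEmb) : Set (Λ → ℝ)) :=
        Finset.mem_coe.mpr (Finset.mem_image_of_mem _ hφ)
      exact Set.indicator_of_notMem (Set.notMem_compl_iff.mpr hmem) 1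
    rw [Finset.sum_congr rfl this]
    simp
  have hA0 : γ (Prod.fst ⁻¹' (↑A)ᶜ) = 0 := by
    rw [← Measure.map_apply measurable_fst hAm.compl, h1]
    exact hmc0 m
  have hB0 : γ (Prod.snd ⁻¹' (↑B)ᶜ) = 0 := by
    rw [← Measure.map_apply measurable_snd hBm.compl, h2]
    exact hmc0 m'
  have haeA : ∀ᵐ xy ∂γ, xy.1 ∈ (↑A : Set (Λ → ℝ)) := by
    rw [ae_iff]; exact hA0
  have haeB : ∀ᵐ xy ∂γ, xy.2 ∈ (↑B : Set (Λ → ℝ)) := by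
    rw [ae_iff]; exact hB0
  have hae := haeA.and haeB
  have hptwise : ∀ᵐ xy ∂γ, |m' - m|
      ≤ (Fintype.card Λ : ℝ)⁻¹ * ∑ i, |xy.1 i - xy.2 i| := by
    refine hae.mono ?_
    rintro xy ⟨hx, hy⟩
    simp only [hA, hB, Finset.coe_image, Set.mem_image, Finset.mem_coe] at hx hy
    obtain ⟨φ, hφ, hφeq⟩ := hx
    obtain ⟨ψ, hψ, hψeq⟩ := hy
    have h4 : |∑ x, (xy.1 x - xy.2 x)| ≤ ∑ x, |xy.1 x - xy.2 x| :=
      Finset.abs_sum_le_sum_abs _ _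
    have h5 : ∑ x, (xy.1 x - xy.2 x) = mag φ - mag ψ := by
      rw [← hφeq, ← hψeq, Finset.sum_sub_distrib, sum_spinEmb, sum_spinEmb]
    have hNnn : (0:ℝ) ≤ (Fintype.card Λ : ℝ)⁻¹ := by positivity
    have key : |m' - m| = (Fintype.card Λ : ℝ)⁻¹ * |∑ x, (xy.1 x - xy.2 x)| := by
      rw [h5, abs_sub_comm, ← mem_magSet.mp hφ, ← mem_magSet.mp hψ, div_sub_div_same,
        abs_div, abs_of_nonneg (by positivity : (0:ℝ) ≤ (Fintype.card Λ : ℝ)), div_eq_inv_mul]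
    rw [key]
    exact mul_le_mul_of_nonneg_left h4 hNnn
  have hub : ∀ᵐ xy ∂γ, ‖(Fintype.card Λ : ℝ)⁻¹ * ∑ i, |xy.1 i - xy.2 i|‖ ≤ 2 := by
    refine hae.mono ?_
    rintro xy ⟨hx, hy⟩
    simp only [hA, hB, Finset.coe_image, Set.mem_image, Finset.mem_coe] at hx hy
    obtain ⟨φ, hφ, hφeq⟩ := hx
    obtain ⟨ψ, hψ, hψeq⟩ := hy
    have hterm : ∀ x, |xy.1 x - xy.2 x| ≤ 2 := by
      intro x
      rw [← hφeq, ← hψeq]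
      by_cases h1' : φ x = true <;> by_cases h2' : ψ x = true <;>
        simp [spinEmb, h1', h2'] <;> norm_num
    have hsum : ∑ x, |xy.1 x - xy.2 x| ≤ (Fintype.card Λ : ℝ) * 2 := by
      calc ∑ x, |xy.1 x - xy.2 x| ≤ ∑ _x : Λ, (2:ℝ) :=
            Finset.sum_le_sum (fun x _ => hterm x)
        _ = (Fintype.card Λ : ℝ) * 2 := by
            rw [Finset.sum_const, nsmul_eq_mul]; simp
    have hnn : (0:ℝ) ≤ ∑ x, |xy.1 x - xy.2 x| :=
      Finset.sum_nonneg (fun x _ => abs_nonneg _)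
    rw [Real.norm_eq_abs, abs_of_nonneg (by positivity)]
    rcases eq_or_ne (Fintype.card Λ) 0 with h0 | h0
    · have : (Finset.univ : Finset Λ) = ∅ := by
        rw [← Finset.card_eq_zero, Finset.card_univ]; exact h0
      rw [this]
      simp
    · have hNpos : (0:ℝ) < (Fintype.card Λ : ℝ) := by exact_mod_cast Nat.pos_of_ne_zero h0
      calc (Fintype.card Λ : ℝ)⁻¹ * ∑ x, |xy.1 x - xy.2 x|
          ≤ (Fintype.card Λ : ℝ)⁻¹ * ((Fintype.card Λ : ℝ) * 2) := by
            exact mul_le_mul_of_nonneg_left hsum (by positivity)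
        _ = 2 := by field_simp
  have hint : Integrable (fun xy : (Λ → ℝ) × (Λ → ℝ) =>
      (Fintype.card Λ : ℝ)⁻¹ * ∑ i, |xy.1 i - xy.2 i|) γ :=
    Integrable.mono' (integrable_const 2) gmeas.aestronglyMeasurable hub
  calc |m' - m| = ∫ _xy, |m' - m| ∂γ := by
        rw [integral_const, probReal_univ, one_smul]
    _ ≤ _ := integral_mono_ae (integrable_const _) hint hptwise

end integrals

section final
set_option linter.unusedSectionVars false
variable {Λ : Type} [Fintype Λ] [DecidableEq Λ]

lemma upper_mem {m m' : ℝ} {φ₀ ψ₀ : Λ → Bool} (hφ₀ : φ₀ ∈ magSet Λ m)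
    (hψ₀ : ψ₀ ∈ magSet Λ m') :
    ∃ γ : Measure ((Λ → ℝ) × (Λ → ℝ)), IsProbabilityMeasure γ ∧
      γ.map Prod.fst = mcMeasure Λ m ∧ γ.map Prod.snd = mcMeasure Λ m' ∧
      |m' - m| = ∫ xy, (Fintype.card Λ : ℝ)⁻¹ * ∑ i, |xy.1 i - xy.2 i| ∂γ := by
  rcases le_total m m' with hmm | hmm
  · have hk := trueSet_card_mono hφ₀ hψ₀ hmm
    exact ⟨cplMeasure Λ m m', isProb_cplMeasure hφ₀ hψ₀ hk, cplMeasure_map_fst hφ₀ hψ₀ hk,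
      cplMeasure_map_snd hφ₀ hψ₀ hk, by
        rw [integral_cplMeasure hφ₀ hψ₀ hk, abs_of_nonneg (sub_nonneg.mpr hmm)]⟩
  · have hk := trueSet_card_mono hψ₀ hφ₀ hmm
    refine ⟨(cplMeasure Λ m' m).map Prod.swap, ?_, ?_, ?_, ?_⟩
    · have := isProb_cplMeasure hψ₀ hφ₀ hk
      exact Measure.isProbabilityMeasure_map measurable_swap.aemeasurable
    · rw [Measure.map_map measurable_fst measurable_swap]
      have hcomp : (Prod.fst ∘ Prod.swap : (Λ → ℝ) × (Λ → ℝ) → (Λ → ℝ)) = Prod.snd := rfl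
      rw [hcomp, cplMeasure_map_snd hψ₀ hφ₀ hk]
    · rw [Measure.map_map measurable_snd measurable_swap]
      have hcomp : (Prod.snd ∘ Prod.swap : (Λ → ℝ) × (Λ → ℝ) → (Λ → ℝ)) = Prod.fst := rfl
      rw [hcomp, cplMeasure_map_fst hψ₀ hφ₀ hk]
    · rw [integral_map measurable_swap.aemeasurable gmeas.aestronglyMeasurable]
      simp only [Prod.fst_swap, Prod.snd_swap]
      have hfeq : (fun xy : (Λ → ℝ) × (Λ → ℝ) =>
            (Fintype.card Λ : ℝ)⁻¹ * ∑ i, |xy.2 i - xy.1 i|)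
          = fun xy => (Fintype.card Λ : ℝ)⁻¹ * ∑ i, |xy.1 i - xy.2 i| :=
        funext fun xy => by
          rw [Finset.sum_congr rfl (fun i _ => abs_sub_comm (xy.2 i) (xy.1 i))]
      rw [hfeq, integral_cplMeasure hψ₀ hφ₀ hk, abs_of_nonpos (sub_nonpos.mpr hmm)]
      ring


theorem stmt5 (Λ : Type) [Fintype Λ] [DecidableEq Λ] (m m' : ℝ)
    (hm : ∃ φ : Λ → Bool, mag φ / (Fintype.card Λ) = m)
    (hm' : ∃ φ : Λ → Bool, mag φ / (Fintype.card Λ) = m') :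
    fluctDist 1 (mcMeasure Λ m) (mcMeasure Λ m') = |m' - m| := by
  classical
  obtain ⟨φ₀, hφ₀'⟩ := hm
  obtain ⟨ψ₀, hψ₀'⟩ := hm'
  have hφ₀ : φ₀ ∈ magSet Λ m := mem_magSet.mpr hφ₀'
  have hψ₀ : ψ₀ ∈ magSet Λ m' := mem_magSet.mpr hψ₀'
  rw [fluctDist]
  simp only [one_div_one, Real.rpow_one]
  have hlb : ∀ c ∈ {c : ℝ | ∃ γ : Measure ((Λ → ℝ) × (Λ → ℝ)), IsProbabilityMeasure γ ∧
      γ.map Prod.fst = mcMeasure Λ m ∧ γ.map Prod.snd = mcMeasure Λ m' ∧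
      c = ∫ xy, (Fintype.card Λ : ℝ)⁻¹ * ∑ i, |xy.1 i - xy.2 i| ∂γ}, |m' - m| ≤ c := by
    rintro c ⟨γ, hγ, h1, h2, rfl⟩
    exact lower_bound ⟨φ₀, hφ₀⟩ ⟨ψ₀, hψ₀⟩ γ hγ h1 h2
  have hmem : |m' - m| ∈ {c : ℝ | ∃ γ : Measure ((Λ → ℝ) × (Λ → ℝ)), IsProbabilityMeasure γ ∧
      γ.map Prod.fst = mcMeasure Λ m ∧ γ.map Prod.snd = mcMeasure Λ m' ∧
      c = ∫ xy, (Fintype.card Λ : ℝ)⁻¹ * ∑ i, |xy.1 i - xy.2 i| ∂γ} :=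
    upper_mem hφ₀ hψ₀
  exact le_antisymm (csInf_le ⟨|m' - m|, hlb⟩ hmem) (le_csInf ⟨_, hmem⟩ hlb)


end final
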